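/- (Key identity (4.9).) Assume u = 0 on ∂E, let φ = φ(z) ∈ C¹([0,1]) be a function of z only, and let ρ ∈ C¹(closure of E) satisfy κ_z = ρ κ_θ on E. Then (F₂₂, φρ u_z)_E − (F₃₃, φ u_z)_E + (2ρ F₂₃^sym, φ u_θ)_E = ∫_E [φ A_{θ,z} ρ + (1/2) ∂_z(φ A_θ)] u_z² dθdz − ∫_E [(1/2) ∂_z(A_θ φ ρ) + A_{θ,z} φ ρ] u_θ² dθdz − ∫_E [∂_θ(φ A_z ρ) + (1+ρ) φ A_{z,θ}] u_θ u_z dθdz. -/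

import Mathlib

open MeasureTheory Set Real

noncomputable section

/-- Partial derivative in `θ` of a scalar function on the parameter plane `(θ, z)`. -/
def dTh (f : ℝ × ℝ → ℝ) (p : ℝ × ℝ) : ℝ := fderiv ℝ f p (1, 0)

/-- Partial derivative in `z` of a scalar function on the parameter plane `(θ, z)`. -/
def dZ (f : ℝ × ℝ → ℝ) (p : ℝ × ℝ) : ℝ := fderiv ℝ f p (0, 1)


-- ### Auxiliary lemmas ###

lemma integral_deriv_open_zero {U : Set ℝ} (hU : IsOpen U) {c d : ℝ} (hsub : U ⊆ Ioo c d)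
    {g g' : ℝ → ℝ} (hg : ∀ x, HasDerivAt g (g' x) x) (hg' : Continuous g')
    (h0 : ∀ x ∈ frontier U, g x = 0) :
    ∫ x in U, g' x = 0 := by
  classical
  set L : ℝ → ℝ := fun x => sSup (Uᶜ ∩ Iic x) with hL
  set R : ℝ → ℝ := fun x => sInf (Uᶜ ∩ Ici x) with hR
  have hcU : c ∉ U := fun h => absurd (hsub h).1 (lt_irrefl c)
  have hdU : d ∉ U := fun h => absurd (hsub h).2 (lt_irrefl d)
  -- basic facts about L
  have hLmem : ∀ x ∈ U, L x ∈ Uᶜ ∩ Iic x := by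
    intro x hx
    exact IsClosed.csSup_mem (s := Uᶜ ∩ Iic x) (hU.isClosed_compl.inter isClosed_Iic)
      ⟨c, ⟨hcU, le_of_lt (hsub hx).1⟩⟩ ⟨x, fun y hy => hy.2⟩
  have hLlt : ∀ x ∈ U, L x < x := by
    intro x hx
    rcases hLmem x hx with ⟨h1, h2⟩
    exact lt_of_le_of_ne h2 (fun h => h1 (by rw [h]; exact hx))
  have hLsub : ∀ x ∈ U, Ioo (L x) x ⊆ U := by
    intro x hx y hy
    by_contra hyU
    exact absurd (le_csSup (s := Uᶜ ∩ Iic x) ⟨x, fun z hz => hz.2⟩ ⟨hyU, le_of_lt hy.2⟩) (not_le.2 hy.1)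
  have hRmem : ∀ x ∈ U, R x ∈ Uᶜ ∩ Ici x := by
    intro x hx
    exact IsClosed.csInf_mem (s := Uᶜ ∩ Ici x) (hU.isClosed_compl.inter isClosed_Ici)
      ⟨d, ⟨hdU, le_of_lt (hsub hx).2⟩⟩ ⟨x, fun y hy => hy.2⟩
  have hRgt : ∀ x ∈ U, x < R x := by
    intro x hx
    rcases hRmem x hx with ⟨h1, h2⟩
    exact lt_of_le_of_ne h2 (fun h => h1 (by rw [← h]; exact hx))
  have hRsub : ∀ x ∈ U, Ioo x (R x) ⊆ U := by
    intro x hx y hy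
    by_contra hyU
    exact absurd (csInf_le (s := Uᶜ ∩ Ici x) ⟨x, fun z hz => hz.2⟩ ⟨hyU, le_of_lt hy.1⟩) (not_le.2 hy.2)
  have hIsub : ∀ x ∈ U, Ioo (L x) (R x) ⊆ U := by
    intro x hx y hy
    rcases lt_trichotomy y x with h | h | h
    · exact hLsub x hx ⟨hy.1, h⟩
    · exact h ▸ hx
    · exact hRsub x hx ⟨h, hy.2⟩
  have hLfr : ∀ x ∈ U, L x ∈ frontier U := by
    intro x hx
    constructor
    · have : L x ∈ closure (Ioo (L x) x) := by
        rw [closure_Ioo (ne_of_lt (hLlt x hx))]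
        exact ⟨le_refl _, le_of_lt (hLlt x hx)⟩
      exact closure_mono (hLsub x hx) this
    · rw [hU.interior_eq]; exact (hLmem x hx).1
  have hRfr : ∀ x ∈ U, R x ∈ frontier U := by
    intro x hx
    constructor
    · have : R x ∈ closure (Ioo x (R x)) := by
        rw [closure_Ioo (ne_of_lt (hRgt x hx))]
        exact ⟨le_of_lt (hRgt x hx), le_refl _⟩
      exact closure_mono (hRsub x hx) this
    · rw [hU.interior_eq]; exact (hRmem x hx).1
  -- endpoint stability
  have hLeq : ∀ x ∈ U, ∀ z ∈ Ioo (L x) (R x), L z = L x := by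
    intro x hx z hz
    have hseteq : Uᶜ ∩ Iic z = Uᶜ ∩ Iic (L x) := by
      ext y
      constructor
      · rintro ⟨h1, h2⟩
        refine ⟨h1, ?_⟩
        by_contra hy
        exact h1 (hIsub x hx ⟨not_le.1 hy, lt_of_le_of_lt h2 hz.2⟩)
      · rintro ⟨h1, h2⟩
        exact ⟨h1, le_trans h2 (le_of_lt hz.1)⟩
    have hLx : L x ∈ Uᶜ := (hLmem x hx).1
    rw [hL]
    simp only
    rw [hseteq]
    apply le_antisymm
    · exact csSup_le ⟨L x, ⟨hLx, Set.self_mem_Iic⟩⟩ (fun y hy => hy.2)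
    · exact le_csSup ⟨L x, fun y hy => hy.2⟩ ⟨hLx, Set.self_mem_Iic⟩
  have hReq : ∀ x ∈ U, ∀ z ∈ Ioo (L x) (R x), R z = R x := by
    intro x hx z hz
    have hseteq : Uᶜ ∩ Ici z = Uᶜ ∩ Ici (R x) := by
      ext y
      constructor
      · rintro ⟨h1, h2⟩
        refine ⟨h1, ?_⟩
        by_contra hy
        exact h1 (hIsub x hx ⟨lt_of_lt_of_le hz.1 h2, not_le.1 hy⟩)
      · rintro ⟨h1, h2⟩
        exact ⟨h1, le_trans (le_of_lt hz.2) h2⟩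
    have hRx : R x ∈ Uᶜ := (hRmem x hx).1
    rw [hR]
    simp only
    rw [hseteq]
    apply le_antisymm
    · exact csInf_le ⟨R x, fun y hy => hy.2⟩ ⟨hRx, Set.self_mem_Ici⟩
    · exact le_csInf ⟨R x, ⟨hRx, Set.self_mem_Ici⟩⟩ (fun y hy => hy.2)
  -- the countable family of components
  set T : Set (Set ℝ) := (fun x => Ioo (L x) (R x)) '' U with hT
  have hTcount : T.Countable := by
    have hsubT : T ⊆ (fun q : ℚ => Ioo (L (q : ℝ)) (R (q : ℝ))) '' {q : ℚ | (q : ℝ) ∈ U} := by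
      rintro s ⟨x, hx, rfl⟩
      obtain ⟨q, hq⟩ := exists_rat_btwn (lt_trans (hLlt x hx) (hRgt x hx))
      have hqI : (q : ℝ) ∈ Ioo (L x) (R x) := ⟨hq.1, hq.2⟩
      have hqU : (q : ℝ) ∈ U := hIsub x hx hqI
      refine ⟨q, hqU, ?_⟩
      show Ioo (L (q : ℝ)) (R (q : ℝ)) = Ioo (L x) (R x)
      rw [hLeq x hx _ hqI, hReq x hx _ hqI]
    exact Set.Countable.mono hsubT (Set.Countable.image (Set.to_countable _) _)
  have hUeq : U = ⋃ (s : T), (s : Set ℝ) := by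
    apply Set.Subset.antisymm
    · intro x hx
      exact Set.mem_iUnion.2 ⟨⟨Ioo (L x) (R x), ⟨x, hx, rfl⟩⟩, ⟨hLlt x hx, hRgt x hx⟩⟩
    · apply Set.iUnion_subset
      rintro ⟨s, x, hx, rfl⟩
      exact hIsub x hx
  have hmeas : ∀ s : T, MeasurableSet (s : Set ℝ) := by
    rintro ⟨s, x, hx, rfl⟩
    exact measurableSet_Ioo
  have hdisj : Pairwise (Function.onFun Disjoint fun s : T => (s : Set ℝ)) := by
    rintro ⟨s, x, hx, rfl⟩ ⟨t, y, hy, rfl⟩ hne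
    rw [Function.onFun]
    rw [Set.disjoint_left]
    intro z hzs hzt
    apply hne
    apply Subtype.ext
    show Ioo (L x) (R x) = Ioo (L y) (R y)
    rw [← hLeq x hx z hzs, ← hReq x hx z hzs, hLeq y hy z hzt, hReq y hy z hzt]
  have hint : IntegrableOn g' U volume :=
    (hg'.integrableOn_Icc (a := c) (b := d)).mono_set (hsub.trans Set.Ioo_subset_Icc_self)
  have := hTcount.to_subtype
  have hsum : ∫ x in U, g' x = ∑' (s : T), ∫ x in (s : Set ℝ), g' x := by
    rw [hUeq] at hint ⊢
    exact MeasureTheory.integral_iUnion hmeas hdisj hint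
  have hzero : ∀ s : T, ∫ x in (s : Set ℝ), g' x = 0 := by
    rintro ⟨s, x, hx, rfl⟩
    have hle : L x ≤ R x := le_of_lt (lt_trans (hLlt x hx) (hRgt x hx))
    show ∫ y in Ioo (L x) (R x), g' y = 0
    have h1 : ∫ y in Ioo (L x) (R x), g' y = ∫ y in (L x)..(R x), g' y := by
      rw [intervalIntegral.integral_of_le hle, MeasureTheory.integral_Ioc_eq_integral_Ioo]
    rw [h1, intervalIntegral.integral_eq_sub_of_hasDerivAt (fun y _ => hg y)
      (hg'.intervalIntegrable _ _), h0 _ (hRfr x hx), h0 _ (hLfr x hx), sub_zero]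
  rw [hsum]
  simp [hzero]


lemma setIntegral_eq_interior {s : Set (ℝ × ℝ)} (hb : Bornology.IsBounded s)
    {f : ℝ × ℝ → ℝ} (hcont : ContinuousOn f (closure s))
    (hf : ∀ p ∈ frontier s, f p = 0) :
    ∫ p in s, f p = ∫ p in interior s, f p := by
  have hK : IsCompact (closure s) := hb.isCompact_closure
  have hfin : volume s ≠ ⊤ :=
    ne_top_of_le_ne_top hK.measure_lt_top.ne (measure_mono subset_closure)
  have hIcl : IntegrableOn f (closure s) := hcont.integrableOn_compact hK
  set T := toMeasurable volume s ∩ closure s with hTdef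
  have hTm : MeasurableSet T :=
    (measurableSet_toMeasurable _ _).inter isClosed_closure.measurableSet
  have hsT : s ⊆ T := subset_inter (subset_toMeasurable _ _) subset_closure
  have hrestrict : volume.restrict s = volume.restrict T := by
    ext A hA
    rw [Measure.restrict_apply hA, Measure.restrict_apply hA]
    apply le_antisymm
    · exact measure_mono (inter_subset_inter_right A hsT)
    · calc volume (A ∩ T) ≤ volume (toMeasurable volume s ∩ A) := by
            rw [inter_comm]; exact measure_mono (inter_subset_inter_left A inter_subset_left)
        _ = volume (s ∩ A) := Measure.measure_toMeasurable_inter hA hfin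
        _ = volume (A ∩ s) := by rw [inter_comm]
  have hIntT : interior s ⊆ T := interior_subset.trans hsT
  have hTsplit : T = interior s ∪ (T \ interior s) := (union_diff_cancel hIntT).symm
  have h1 : (∫ p in s, f p) = ∫ p in T, f p := by
    show (∫ p, f p ∂(volume.restrict s)) = _
    rw [hrestrict]
  rw [h1, hTsplit, setIntegral_union disjoint_sdiff_self_right
    (hTm.diff isOpen_interior.measurableSet)
    (hIcl.mono_set (interior_subset.trans subset_closure))
    (hIcl.mono_set ((diff_subset.trans inter_subset_right)))]
  have hz : ∀ p ∈ T \ interior s, f p = 0 := by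
    intro p hp
    exact hf p ⟨hp.1.2, hp.2⟩
  rw [setIntegral_eq_zero_of_forall_eq_zero hz, add_zero]

lemma slice_frontier_right {U : Set (ℝ × ℝ)} (hU : IsOpen U) {x y : ℝ}
    (hy : y ∈ frontier {z : ℝ | (x, z) ∈ U}) : (x, y) ∈ frontier U := by
  have hcont : Continuous (fun z : ℝ => (x, z)) := Continuous.prodMk_right x
  have h1 : (x, y) ∈ closure U := by
    have := (hcont.closure_preimage_subset U) hy.1
    exact this
  have hopen : IsOpen {z : ℝ | (x, z) ∈ U} := hU.preimage hcont
  have h2 : (x, y) ∉ U := fun h => (hy.2) (by rw [hopen.interior_eq]; exact h)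
  exact ⟨h1, by rwa [hU.interior_eq]⟩

lemma slice_frontier_left {U : Set (ℝ × ℝ)} (hU : IsOpen U) {x y : ℝ}
    (hx : x ∈ frontier {t : ℝ | (t, y) ∈ U}) : (x, y) ∈ frontier U := by
  have hcont : Continuous (fun t : ℝ => (t, y)) := continuous_id.prodMk continuous_const
  have h1 : (x, y) ∈ closure U := (hcont.closure_preimage_subset U) hx.1
  have hopen : IsOpen {t : ℝ | (t, y) ∈ U} := hU.preimage hcont
  have h2 : (x, y) ∉ U := fun h => (hx.2) (by rw [hopen.interior_eq]; exact h)
  exact ⟨h1, by rwa [hU.interior_eq]⟩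

lemma hasDerivAt_slice_right {g : ℝ × ℝ → ℝ} (hg : ContDiff ℝ 1 g) (x y : ℝ) :
    HasDerivAt (fun z => g (x, z)) (dZ g (x, y)) y := by
  have hfd : HasFDerivAt (fun z : ℝ => (x, z))
      ((0 : ℝ →L[ℝ] ℝ).prod (ContinuousLinearMap.id ℝ ℝ)) y :=
    HasFDerivAt.prodMk (hasFDerivAt_const x y) (hasFDerivAt_id y)
  have hgd := ((hg.differentiable one_ne_zero) (x, y)).hasFDerivAt
  have := (hgd.comp y hfd).hasDerivAt
  simpa [dZ, ContinuousLinearMap.comp_apply, Function.comp_def] using this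

lemma hasDerivAt_slice_left {g : ℝ × ℝ → ℝ} (hg : ContDiff ℝ 1 g) (x y : ℝ) :
    HasDerivAt (fun t => g (t, y)) (dTh g (x, y)) x := by
  have hfd : HasFDerivAt (fun t : ℝ => (t, y))
      ((ContinuousLinearMap.id ℝ ℝ).prod (0 : ℝ →L[ℝ] ℝ)) x :=
    HasFDerivAt.prodMk (hasFDerivAt_id x) (hasFDerivAt_const y x)
  have hgd := ((hg.differentiable one_ne_zero) (x, y)).hasFDerivAt
  have := (hgd.comp x hfd).hasDerivAt
  simpa [dTh, ContinuousLinearMap.comp_apply, Function.comp_def] using this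

lemma integral_dZ_zero {U : Set (ℝ × ℝ)} (hU : IsOpen U)
    (hsub : U ⊆ Ioo (0:ℝ) 1 ×ˢ Ioo (0:ℝ) 1)
    {g : ℝ × ℝ → ℝ} (hg : ContDiff ℝ 1 g)
    (h0 : ∀ p ∈ frontier U, g p = 0) :
    ∫ p in U, dZ g p = 0 := by
  have hcont : Continuous (dZ g) := (hg.continuous_fderiv one_ne_zero).clm_apply continuous_const
  have hbU : Bornology.IsBounded U :=
    ((Metric.isBounded_Ioo (0:ℝ) 1).prod (Metric.isBounded_Ioo (0:ℝ) 1)).subset hsub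
  have hK : IsCompact (closure U) := hbU.isCompact_closure
  have hint : IntegrableOn (dZ g) U :=
    (hcont.continuousOn.integrableOn_compact hK).mono_set subset_closure
  rw [← integral_indicator hU.measurableSet, Measure.volume_eq_prod,
    integral_prod _ (by rw [← Measure.volume_eq_prod]; exact hint.integrable_indicator hU.measurableSet)]
  have hxin : ∀ x : ℝ, (∫ y, U.indicator (dZ g) (x, y)) = 0 := by
    intro x
    have hslice_open : IsOpen {z : ℝ | (x, z) ∈ U} := hU.preimage (Continuous.prodMk_right x)
    have heq : ∀ y : ℝ, U.indicator (dZ g) (x, y)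
        = ({z : ℝ | (x, z) ∈ U}).indicator (fun z => dZ g (x, z)) y := by
      intro y
      by_cases h : (x, y) ∈ U <;> simp [Set.indicator, h, Set.mem_setOf_eq]
    rw [integral_congr_ae (Filter.Eventually.of_forall heq),
      integral_indicator hslice_open.measurableSet]
    exact integral_deriv_open_zero hslice_open (fun z hz => (hsub hz).2)
      (fun z => hasDerivAt_slice_right hg x z) (hcont.comp (Continuous.prodMk_right x))
      (fun z hz => h0 _ (slice_frontier_right hU hz))
  simp only [hxin, integral_zero]

lemma integral_dTh_zero {U : Set (ℝ × ℝ)} (hU : IsOpen U)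
    (hsub : U ⊆ Ioo (0:ℝ) 1 ×ˢ Ioo (0:ℝ) 1)
    {g : ℝ × ℝ → ℝ} (hg : ContDiff ℝ 1 g)
    (h0 : ∀ p ∈ frontier U, g p = 0) :
    ∫ p in U, dTh g p = 0 := by
  have hcont : Continuous (dTh g) := (hg.continuous_fderiv one_ne_zero).clm_apply continuous_const
  have hbU : Bornology.IsBounded U :=
    ((Metric.isBounded_Ioo (0:ℝ) 1).prod (Metric.isBounded_Ioo (0:ℝ) 1)).subset hsub
  have hK : IsCompact (closure U) := hbU.isCompact_closure
  have hint : IntegrableOn (dTh g) U :=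
    (hcont.continuousOn.integrableOn_compact hK).mono_set subset_closure
  rw [← integral_indicator hU.measurableSet, Measure.volume_eq_prod,
    integral_prod_symm _ (by rw [← Measure.volume_eq_prod]; exact hint.integrable_indicator hU.measurableSet)]
  have hyin : ∀ y : ℝ, (∫ x, U.indicator (dTh g) (x, y)) = 0 := by
    intro y
    have hcxy : Continuous (fun t : ℝ => (t, y)) := continuous_id.prodMk continuous_const
    have hslice_open : IsOpen {t : ℝ | (t, y) ∈ U} := hU.preimage hcxy
    have heq : ∀ x : ℝ, U.indicator (dTh g) (x, y)
        = ({t : ℝ | (t, y) ∈ U}).indicator (fun t => dTh g (t, y)) x := by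
      intro x
      by_cases h : (x, y) ∈ U <;> simp [Set.indicator, h, Set.mem_setOf_eq]
    rw [integral_congr_ae (Filter.Eventually.of_forall heq),
      integral_indicator hslice_open.measurableSet]
    exact integral_deriv_open_zero hslice_open (fun t ht => (hsub ht).1)
      (fun t => hasDerivAt_slice_left hg t y) (hcont.comp hcxy)
      (fun t ht => h0 _ (slice_frontier_left hU ht))
  simp only [hyin, integral_zero]

lemma dZ_mul {f g : ℝ × ℝ → ℝ} {p : ℝ × ℝ} (hf : DifferentiableAt ℝ f p)
    (hg : DifferentiableAt ℝ g p) :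
    dZ (fun q => f q * g q) p = dZ f p * g p + f p * dZ g p := by
  unfold dZ
  rw [fderiv_fun_mul hf hg]
  simp only [ContinuousLinearMap.add_apply, ContinuousLinearMap.smul_apply, smul_eq_mul]
  ring

lemma dTh_mul {f g : ℝ × ℝ → ℝ} {p : ℝ × ℝ} (hf : DifferentiableAt ℝ f p)
    (hg : DifferentiableAt ℝ g p) :
    dTh (fun q => f q * g q) p = dTh f p * g p + f p * dTh g p := by
  unfold dTh
  rw [fderiv_fun_mul hf hg]
  simp only [ContinuousLinearMap.add_apply, ContinuousLinearMap.smul_apply, smul_eq_mul]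
  ring

lemma dZ_phi {φ : ℝ → ℝ} (hφ : ContDiff ℝ 1 φ) (p : ℝ × ℝ) :
    dZ (fun q : ℝ × ℝ => φ q.2) p = deriv φ p.2 := by
  have h : HasFDerivAt (fun q : ℝ × ℝ => φ q.2)
      ((deriv φ p.2) • ContinuousLinearMap.snd ℝ ℝ ℝ) p :=
    ((hφ.differentiable one_ne_zero p.2).hasDerivAt).comp_hasFDerivAt p hasFDerivAt_snd
  rw [dZ, h.fderiv]
  simp

lemma dTh_phi {φ : ℝ → ℝ} (hφ : ContDiff ℝ 1 φ) (p : ℝ × ℝ) :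
    dTh (fun q : ℝ × ℝ => φ q.2) p = 0 := by
  have h : HasFDerivAt (fun q : ℝ × ℝ => φ q.2)
      ((deriv φ p.2) • ContinuousLinearMap.snd ℝ ℝ ℝ) p :=
    ((hφ.differentiable one_ne_zero p.2).hasDerivAt).comp_hasFDerivAt p hasFDerivAt_snd
  rw [dTh, h.fderiv]
  simp

lemma dZ_sub {f g : ℝ × ℝ → ℝ} {p : ℝ × ℝ} (hf : DifferentiableAt ℝ f p)
    (hg : DifferentiableAt ℝ g p) :
    dZ (fun q => f q - g q) p = dZ f p - dZ g p := by
  unfold dZ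
  rw [fderiv_fun_sub hf hg]
  simp

lemma integrableOn_of_contOn {s : Set (ℝ × ℝ)} (hb : Bornology.IsBounded s) {f : ℝ × ℝ → ℝ}
    (hf : ContinuousOn f (closure s)) : IntegrableOn f s :=
  (hf.integrableOn_compact hb.isCompact_closure).mono_set subset_closure

lemma continuous_dZ {f : ℝ × ℝ → ℝ} (hf : ContDiff ℝ 1 f) : Continuous (dZ f) :=
  (hf.continuous_fderiv one_ne_zero).clm_apply continuous_const

lemma continuous_dTh {f : ℝ × ℝ → ℝ} (hf : ContDiff ℝ 1 f) : Continuous (dTh f) :=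
  (hf.continuous_fderiv one_ne_zero).clm_apply continuous_const

/-- The two-dimensional data: the functions `z1, z2` determining the parameter domain `E`,
the metric coefficients `Ath = A_θ`, `Az = A_z`, the principal curvatures `kth = κ_θ`,
`kz = κ_z`, and the components `ut = u_t`, `uth = u_θ`, `uz = u_z` of a displacement. -/
structure Setup2D where
  z1 : ℝ → ℝ
  z2 : ℝ → ℝ
  Ath : ℝ × ℝ → ℝ
  Az : ℝ × ℝ → ℝ
  kth : ℝ × ℝ → ℝ
  kz : ℝ × ℝ → ℝ
  ut : ℝ × ℝ → ℝ
  uth : ℝ × ℝ → ℝ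
  uz : ℝ × ℝ → ℝ

namespace Setup2D

/-- The parameter domain `E = {(θ,z) : θ ∈ (0,1), z ∈ (z1 θ, z2 θ)}`. -/
def E (S : Setup2D) : Set (ℝ × ℝ) :=
  {p | p.1 ∈ Ioo (0 : ℝ) 1 ∧ p.2 ∈ Ioo (S.z1 p.1) (S.z2 p.1)}

/-- The entry `F₂₂` of the simplified gradient. -/
def F22 (S : Setup2D) (p : ℝ × ℝ) : ℝ :=
  (S.Az p * dTh S.uth p + S.Az p * S.Ath p * S.kth p * S.ut p + dZ S.Ath p * S.uz p) /
    (S.Az p * S.Ath p)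

/-- The entry `F₂₃` of the simplified gradient. -/
def F23 (S : Setup2D) (p : ℝ × ℝ) : ℝ :=
  (S.Ath p * dZ S.uth p - dTh S.Az p * S.uz p) / (S.Az p * S.Ath p)

/-- The entry `F₃₂` of the simplified gradient. -/
def F32 (S : Setup2D) (p : ℝ × ℝ) : ℝ :=
  (S.Az p * dTh S.uz p - dZ S.Ath p * S.uth p) / (S.Az p * S.Ath p)

/-- The entry `F₃₃` of the simplified gradient. -/
def F33 (S : Setup2D) (p : ℝ × ℝ) : ℝ :=
  (S.Ath p * dZ S.uz p + S.Az p * S.Ath p * S.kz p * S.ut p + dTh S.Az p * S.uth p) /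
    (S.Az p * S.Ath p)

/-- `F₂₃^sym = (F₂₃ + F₃₂)/2`. -/
def F23sym (S : Setup2D) (p : ℝ × ℝ) : ℝ := (S.F23 p + S.F32 p) / 2

/-- `|F^sym|² = F₂₂² + 2 (F₂₃^sym)² + F₃₃²`. -/
def FsymSq (S : Setup2D) (p : ℝ × ℝ) : ℝ := S.F22 p ^ 2 + 2 * S.F23sym p ^ 2 + S.F33 p ^ 2

/-- The weighted inner product `(f, g)_E = ∫_E A_θ A_z f g dθ dz`. -/
def ip (S : Setup2D) (f g : ℝ × ℝ → ℝ) : ℝ := ∫ p in S.E, S.Ath p * S.Az p * f p * g p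

/-- The weighted squared norm `‖f‖²_E`. -/
def nsq (S : Setup2D) (f : ℝ × ℝ → ℝ) : ℝ := S.ip f f

/-- The weighted squared norm `‖|F^sym|‖²_E` of the simplified symmetrized gradient. -/
def nF (S : Setup2D) : ℝ := ∫ p in S.E, S.Ath p * S.Az p * S.FsymSq p

/-- The standing context: the form of the domain, the regularity `A_θ, A_z, κ_θ, κ_z ∈ C¹`,
positivity of `A_θ, A_z` on the closure of `E`, and `u ∈ C¹`. -/
def Base (S : Setup2D) : Prop :=
  (∀ θ ∈ Icc (0 : ℝ) 1, 0 ≤ S.z1 θ ∧ S.z1 θ < S.z2 θ ∧ S.z2 θ ≤ 1) ∧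
  ContDiff ℝ 1 S.Ath ∧ ContDiff ℝ 1 S.Az ∧ ContDiff ℝ 1 S.kth ∧ ContDiff ℝ 1 S.kz ∧
  (∀ p ∈ closure S.E, 0 < S.Ath p ∧ 0 < S.Az p) ∧
  ContDiff ℝ 1 S.ut ∧ ContDiff ℝ 1 S.uth ∧ ContDiff ℝ 1 S.uz

/-- The boundary condition `u = 0` on `∂E`. -/
def BZero (S : Setup2D) : Prop := ∀ p ∈ frontier S.E, S.ut p = 0 ∧ S.uth p = 0 ∧ S.uz p = 0

/-- The additional `C²` regularity of `A_θ, A_z` and `u`. -/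
def Csq (S : Setup2D) : Prop :=
  ContDiff ℝ 2 S.Ath ∧ ContDiff ℝ 2 S.Az ∧
  ContDiff ℝ 2 S.ut ∧ ContDiff ℝ 2 S.uth ∧ ContDiff ℝ 2 S.uz

/-- The Codazzi–Gauss identity `∂_z(A_{θ,z}/A_z) + ∂_θ(A_{z,θ}/A_θ) = -A_z A_θ κ_z κ_θ`. -/
def CodazziGauss (S : Setup2D) : Prop :=
  ∀ p ∈ S.E,
    dZ (fun q => dZ S.Ath q / S.Az q) p + dTh (fun q => dTh S.Az q / S.Ath q) p =
      -(S.Az p * S.Ath p * S.kz p * S.kth p)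

/-- The uniform bounds `a ≤ A_θ, A_z ≤ A` and `|∇A_θ| + |∇A_z| ≤ B` on the closure of `E`. -/
def Bounds (S : Setup2D) (a A B : ℝ) : Prop :=
  ∀ p ∈ closure S.E, a ≤ S.Ath p ∧ S.Ath p ≤ A ∧ a ≤ S.Az p ∧ S.Az p ≤ A ∧
    ‖fderiv ℝ S.Ath p‖ + ‖fderiv ℝ S.Az p‖ ≤ B

/-- `ρ` satisfies `κ_z = ρ κ_θ` with `ρ₀ ≤ ρ ≤ ρ₁` and `|∇ρ| ≤ c2`. -/
def RhoHyp (S : Setup2D) (ρ : ℝ × ℝ → ℝ) (ρ0 ρ1 c2 : ℝ) : Prop :=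
  ContDiff ℝ 1 ρ ∧ (∀ p ∈ S.E, S.kz p = ρ p * S.kth p) ∧
  (∀ p ∈ closure S.E, ρ0 ≤ ρ p ∧ ρ p ≤ ρ1 ∧ ‖fderiv ℝ ρ p‖ ≤ c2)

/-- Nonnegativity of the curvatures and the comparability condition
`(1/c)√(κ_θ κ_z) ≤ κ_θ, κ_z ≤ c √(κ_θ κ_z)` on `E`. -/
def Comparable (S : Setup2D) (c : ℝ) : Prop :=
  ∀ p ∈ S.E, 0 ≤ S.kth p ∧ 0 ≤ S.kz p ∧
    c⁻¹ * Real.sqrt (S.kth p * S.kz p) ≤ S.kth p ∧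
    S.kth p ≤ c * Real.sqrt (S.kth p * S.kz p) ∧
    c⁻¹ * Real.sqrt (S.kth p * S.kz p) ≤ S.kz p ∧
    S.kz p ≤ c * Real.sqrt (S.kth p * S.kz p)

end Setup2D


lemma pointwise_key (S : Setup2D) (hAth : ContDiff ℝ 1 S.Ath) (hAz : ContDiff ℝ 1 S.Az)
    (huth : ContDiff ℝ 1 S.uth) (huz : ContDiff ℝ 1 S.uz)
    (φ : ℝ → ℝ) (hφ : ContDiff ℝ 1 φ) (ρ : ℝ × ℝ → ℝ) (hρ : ContDiff ℝ 1 ρ)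
    (p : ℝ × ℝ) (ha : S.Ath p ≠ 0) (hb : S.Az p ≠ 0) (hk : S.kz p = ρ p * S.kth p) :
    S.Ath p * S.Az p * S.F22 p * (φ p.2 * ρ p * S.uz p)
      - S.Ath p * S.Az p * S.F33 p * (φ p.2 * S.uz p)
      + S.Ath p * S.Az p * (2 * ρ p * S.F23sym p) * (φ p.2 * S.uth p)
    = (φ p.2 * dZ S.Ath p * ρ p + (1/2) * dZ (fun q => φ q.2 * S.Ath q) p) * S.uz p ^ 2
      - ((1/2) * dZ (fun q => S.Ath q * φ q.2 * ρ q) p + dZ S.Ath p * φ p.2 * ρ p) * S.uth p ^ 2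
      - (dTh (fun q => φ q.2 * S.Az q * ρ q) p + (1 + ρ p) * φ p.2 * dTh S.Az p)
          * (S.uth p * S.uz p)
      + dTh (fun q => φ q.2 * ρ q * S.Az q * S.uth q * S.uz q) p
      + (1/2) * dZ (fun q => φ q.2 * ρ q * S.Ath q * S.uth q * S.uth q
          - φ q.2 * S.Ath q * S.uz q * S.uz q) p := by
  have dphi : DifferentiableAt ℝ (fun q : ℝ × ℝ => φ q.2) p :=
    DifferentiableAt.comp p (hφ.differentiable one_ne_zero p.2) differentiableAt_snd
  have dAth : DifferentiableAt ℝ S.Ath p := (hAth.differentiable one_ne_zero) p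
  have dAz : DifferentiableAt ℝ S.Az p := (hAz.differentiable one_ne_zero) p
  have duth : DifferentiableAt ℝ S.uth p := (huth.differentiable one_ne_zero) p
  have duz : DifferentiableAt ℝ S.uz p := (huz.differentiable one_ne_zero) p
  have drho : DifferentiableAt ℝ ρ p := (hρ.differentiable one_ne_zero) p
  have d1 : DifferentiableAt ℝ (fun q : ℝ × ℝ => φ q.2 * ρ q) p := dphi.mul drho
  have d2 : DifferentiableAt ℝ (fun q : ℝ × ℝ => φ q.2 * ρ q * S.Az q) p := d1.mul dAz
  have d3 : DifferentiableAt ℝ (fun q : ℝ × ℝ => φ q.2 * ρ q * S.Az q * S.uth q) p := d2.mul duth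
  have d1a : DifferentiableAt ℝ (fun q : ℝ × ℝ => φ q.2 * ρ q * S.Ath q) p := d1.mul dAth
  have d2a : DifferentiableAt ℝ (fun q : ℝ × ℝ => φ q.2 * ρ q * S.Ath q * S.uth q) p :=
    d1a.mul duth
  have d1b : DifferentiableAt ℝ (fun q : ℝ × ℝ => φ q.2 * S.Ath q) p := dphi.mul dAth
  have d2b : DifferentiableAt ℝ (fun q : ℝ × ℝ => φ q.2 * S.Ath q * S.uz q) p := d1b.mul duz
  have d1c : DifferentiableAt ℝ (fun q : ℝ × ℝ => S.Ath q * φ q.2) p := dAth.mul dphi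
  have d1d : DifferentiableAt ℝ (fun q : ℝ × ℝ => φ q.2 * S.Az q) p := dphi.mul dAz
  rw [dZ_sub (d2a.fun_mul duth) (d2b.fun_mul duz),
    dZ_mul d2a duth, dZ_mul d1a duth, dZ_mul d1 dAth,
    dZ_mul d2b duz, dZ_mul d1b duz,
    dTh_mul d3 duz, dTh_mul d2 duth, dTh_mul d1 dAz, dTh_mul dphi drho,
    dZ_mul dphi drho,
    dZ_mul d1c drho, dZ_mul dAth dphi,
    dTh_mul d1d drho, dTh_mul dphi dAz,
    dZ_mul dphi dAth,
    dZ_phi hφ, dTh_phi hφ]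
  simp only [Setup2D.F22, Setup2D.F33, Setup2D.F23sym, Setup2D.F23, Setup2D.F32]
  rw [hk]
  have h2 : S.Az p * S.Ath p ≠ 0 := mul_ne_zero hb ha
  field_simp
  ring

set_option maxHeartbeats 2000000 in
theorem key_identity (S : Setup2D) (hBase : S.Base) (hB0 : S.BZero)
    (φ : ℝ → ℝ) (hφ : ContDiff ℝ 1 φ)
    (ρ : ℝ × ℝ → ℝ) (hρ : ContDiff ℝ 1 ρ) (hρκ : ∀ p ∈ S.E, S.kz p = ρ p * S.kth p) :
    S.ip S.F22 (fun p => φ p.2 * ρ p * S.uz p) - S.ip S.F33 (fun p => φ p.2 * S.uz p) +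
        S.ip (fun p => 2 * ρ p * S.F23sym p) (fun p => φ p.2 * S.uth p) =
      (∫ p in S.E,
        (φ p.2 * dZ S.Ath p * ρ p + (1 / 2) * dZ (fun q => φ q.2 * S.Ath q) p) * S.uz p ^ 2) -
      (∫ p in S.E,
        ((1 / 2) * dZ (fun q => S.Ath q * φ q.2 * ρ q) p + dZ S.Ath p * φ p.2 * ρ p) *
          S.uth p ^ 2) -
      (∫ p in S.E,
        (dTh (fun q => φ q.2 * S.Az q * ρ q) p + (1 + ρ p) * φ p.2 * dTh S.Az p) *
          (S.uth p * S.uz p)) := by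
  obtain ⟨hz12, hAth, hAz, hkth, hkz, hpos, hut, huth, huz⟩ := hBase
  have hEsub : S.E ⊆ Ioo (0:ℝ) 1 ×ˢ Ioo (0:ℝ) 1 := by
    rintro ⟨θ, z⟩ ⟨h1, h2⟩
    obtain ⟨ha1, _, ha2⟩ := hz12 θ (Ioo_subset_Icc_self h1)
    exact ⟨h1, lt_of_le_of_lt ha1 h2.1, lt_of_lt_of_le h2.2 ha2⟩
  have hbE : Bornology.IsBounded S.E :=
    ((Metric.isBounded_Ioo (0:ℝ) 1).prod (Metric.isBounded_Ioo (0:ℝ) 1)).subset hEsub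
  set U := interior S.E with hUdef
  have hUopen : IsOpen U := isOpen_interior
  have hUsubE : U ⊆ S.E := interior_subset
  have hUsub : U ⊆ Ioo (0:ℝ) 1 ×ˢ Ioo (0:ℝ) 1 := hUsubE.trans hEsub
  have hbU : Bornology.IsBounded U := hbE.subset hUsubE
  have hclU : closure U ⊆ closure S.E := closure_mono hUsubE
  have hfrU : frontier U ⊆ frontier S.E := by
    intro p hp
    refine ⟨hclU hp.1, ?_⟩
    have h2 := hp.2
    rwa [hUdef, interior_interior] at h2
  -- continuity facts
  have hφsnd : ContDiff ℝ 1 (fun q : ℝ × ℝ => φ q.2) := hφ.comp contDiff_snd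
  have hcφ : Continuous (fun q : ℝ × ℝ => φ q.2) := hφsnd.continuous
  have hcAth : Continuous S.Ath := hAth.continuous
  have hcAz : Continuous S.Az := hAz.continuous
  have hcρ : Continuous ρ := hρ.continuous
  have hcuth : Continuous S.uth := huth.continuous
  have hcuz : Continuous S.uz := huz.continuous
  have hcut : Continuous S.ut := hut.continuous
  have hne : ∀ p ∈ closure S.E, S.Az p * S.Ath p ≠ 0 := fun p hp =>
    mul_ne_zero (hpos p hp).2.ne' (hpos p hp).1.ne'
  have hcF22 : ContinuousOn S.F22 (closure S.E) := by
    apply ContinuousOn.div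
    · exact (((hcAz.mul (continuous_dTh huth)).add
        (((hcAz.mul hcAth).mul hkth.continuous).mul hcut)).add
        ((continuous_dZ hAth).mul hcuz)).continuousOn
    · exact (hcAz.mul hcAth).continuousOn
    · exact hne
  have hcF33 : ContinuousOn S.F33 (closure S.E) := by
    apply ContinuousOn.div
    · exact (((hcAth.mul (continuous_dZ huz)).add
        (((hcAz.mul hcAth).mul hkz.continuous).mul hcut)).add
        ((continuous_dTh hAz).mul hcuth)).continuousOn
    · exact (hcAz.mul hcAth).continuousOn
    · exact hne
  have hcF23s : ContinuousOn S.F23sym (closure S.E) := by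
    apply ContinuousOn.div _ continuousOn_const (fun p _ => two_ne_zero)
    apply ContinuousOn.add
    · apply ContinuousOn.div
      · exact ((hcAth.mul (continuous_dZ huth)).sub
          ((continuous_dTh hAz).mul hcuz)).continuousOn
      · exact (hcAz.mul hcAth).continuousOn
      · exact hne
    · apply ContinuousOn.div
      · exact ((hcAz.mul (continuous_dTh huz)).sub
          ((continuous_dZ hAth).mul hcuth)).continuousOn
      · exact (hcAz.mul hcAth).continuousOn
      · exact hne
  -- the six integrands
  set l1 : ℝ × ℝ → ℝ := fun p => S.Ath p * S.Az p * S.F22 p * (φ p.2 * ρ p * S.uz p) with hl1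
  set l2 : ℝ × ℝ → ℝ := fun p => S.Ath p * S.Az p * S.F33 p * (φ p.2 * S.uz p) with hl2
  set l3 : ℝ × ℝ → ℝ :=
    fun p => S.Ath p * S.Az p * (2 * ρ p * S.F23sym p) * (φ p.2 * S.uth p) with hl3
  set r1 : ℝ × ℝ → ℝ := fun p =>
    (φ p.2 * dZ S.Ath p * ρ p + (1 / 2) * dZ (fun q => φ q.2 * S.Ath q) p) * S.uz p ^ 2 with hr1
  set r2 : ℝ × ℝ → ℝ := fun p =>
    ((1 / 2) * dZ (fun q => S.Ath q * φ q.2 * ρ q) p + dZ S.Ath p * φ p.2 * ρ p) *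
      S.uth p ^ 2 with hr2
  set r3 : ℝ × ℝ → ℝ := fun p =>
    (dTh (fun q => φ q.2 * S.Az q * ρ q) p + (1 + ρ p) * φ p.2 * dTh S.Az p) *
      (S.uth p * S.uz p) with hr3
  have hcl1 : ContinuousOn l1 (closure S.E) :=
    (((hcAth.mul hcAz).continuousOn.mul hcF22).mul
      (((hcφ.mul hcρ).mul hcuz)).continuousOn)
  have hcl2 : ContinuousOn l2 (closure S.E) :=
    (((hcAth.mul hcAz).continuousOn.mul hcF33).mul ((hcφ.mul hcuz)).continuousOn)
  have hcl3 : ContinuousOn l3 (closure S.E) := by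
    apply ContinuousOn.mul
    · apply ContinuousOn.mul (hcAth.mul hcAz).continuousOn
      exact (continuousOn_const.mul hcρ.continuousOn).mul hcF23s
    · exact ((hcφ.mul hcuth)).continuousOn
  have hcr1 : Continuous r1 := by
    apply Continuous.mul
    · exact ((hcφ.mul (continuous_dZ hAth)).mul hcρ).add
        (continuous_const.mul (continuous_dZ (hφsnd.mul hAth)))
    · exact hcuz.pow 2
  have hcr2 : Continuous r2 := by
    apply Continuous.mul
    · exact (continuous_const.mul (continuous_dZ ((hAth.mul hφsnd).mul hρ))).add
        (((continuous_dZ hAth).mul hcφ).mul hcρ)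
    · exact hcuth.pow 2
  have hcr3 : Continuous r3 := by
    apply Continuous.mul
    · exact (continuous_dTh ((hφsnd.mul hAz).mul hρ)).add
        (((continuous_const.add hcρ).mul hcφ).mul (continuous_dTh hAz))
    · exact hcuth.mul hcuz
  -- reduction to the interior
  have red1 : (∫ p in S.E, l1 p) = ∫ p in U, l1 p :=
    setIntegral_eq_interior hbE hcl1 (fun p hp => by
      simp [hl1, (hB0 p hp).2.2, (hB0 p hp).2.1])
  have red2 : (∫ p in S.E, l2 p) = ∫ p in U, l2 p :=
    setIntegral_eq_interior hbE hcl2 (fun p hp => by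
      simp [hl2, (hB0 p hp).2.2])
  have red3 : (∫ p in S.E, l3 p) = ∫ p in U, l3 p :=
    setIntegral_eq_interior hbE hcl3 (fun p hp => by
      simp [hl3, (hB0 p hp).2.1])
  have red4 : (∫ p in S.E, r1 p) = ∫ p in U, r1 p :=
    setIntegral_eq_interior hbE hcr1.continuousOn (fun p hp => by
      simp [hr1, (hB0 p hp).2.2])
  have red5 : (∫ p in S.E, r2 p) = ∫ p in U, r2 p :=
    setIntegral_eq_interior hbE hcr2.continuousOn (fun p hp => by
      simp [hr2, (hB0 p hp).2.1])
  have red6 : (∫ p in S.E, r3 p) = ∫ p in U, r3 p :=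
    setIntegral_eq_interior hbE hcr3.continuousOn (fun p hp => by
      simp [hr3, (hB0 p hp).2.1])
  -- integrability on U
  have hil1 : IntegrableOn l1 U := integrableOn_of_contOn hbU (hcl1.mono hclU)
  have hil2 : IntegrableOn l2 U := integrableOn_of_contOn hbU (hcl2.mono hclU)
  have hil3 : IntegrableOn l3 U := integrableOn_of_contOn hbU (hcl3.mono hclU)
  have hir1 : IntegrableOn r1 U := integrableOn_of_contOn hbU hcr1.continuousOn
  have hir2 : IntegrableOn r2 U := integrableOn_of_contOn hbU hcr2.continuousOn
  have hir3 : IntegrableOn r3 U := integrableOn_of_contOn hbU hcr3.continuousOn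
  -- the divergence terms
  set P2 : ℝ × ℝ → ℝ := fun q => φ q.2 * ρ q * S.Az q * S.uth q * S.uz q with hP2
  set Q2 : ℝ × ℝ → ℝ := fun q =>
    φ q.2 * ρ q * S.Ath q * S.uth q * S.uth q - φ q.2 * S.Ath q * S.uz q * S.uz q with hQ2
  have hP2smooth : ContDiff ℝ 1 P2 := ((((hφsnd.mul hρ).mul hAz).mul huth).mul huz)
  have hQ2smooth : ContDiff ℝ 1 Q2 :=
    ((((hφsnd.mul hρ).mul hAth).mul huth).mul huth).sub
      (((hφsnd.mul hAth).mul huz).mul huz)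
  have hiP2 : IntegrableOn (dTh P2) U :=
    integrableOn_of_contOn hbU (continuous_dTh hP2smooth).continuousOn
  have hiQ2 : IntegrableOn (dZ Q2) U :=
    integrableOn_of_contOn hbU (continuous_dZ hQ2smooth).continuousOn
  have hdivP : (∫ p in U, dTh P2 p) = 0 :=
    integral_dTh_zero hUopen hUsub hP2smooth (fun p hp => by
      have h0 := hB0 p (hfrU hp)
      simp [hP2, h0.2.2])
  have hdivQ : (∫ p in U, dZ Q2 p) = 0 :=
    integral_dZ_zero hUopen hUsub hQ2smooth (fun p hp => by
      have h0 := hB0 p (hfrU hp)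
      simp [hQ2, h0.2.1, h0.2.2])
  -- pointwise identity on U
  have hpoint : ∀ p ∈ U, l1 p - l2 p + l3 p
      = r1 p - r2 p - r3 p + dTh P2 p + (1/2) * dZ Q2 p := by
    intro p hp
    have hpE : p ∈ S.E := hUsubE hp
    have hpcl : p ∈ closure S.E := subset_closure hpE
    exact pointwise_key S hAth hAz huth huz φ hφ ρ hρ p
      (hpos p hpcl).1.ne' (hpos p hpcl).2.ne' (hρκ p hpE)
  have hsub12 : IntegrableOn (fun p => l1 p - l2 p) U := hil1.sub hil2
  have hA1 : ∫ p in U, (l1 p - l2 p + l3 p)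
      = (∫ p in U, (l1 p - l2 p)) + ∫ p in U, l3 p := integral_add hsub12 hil3
  have hA2 : ∫ p in U, (l1 p - l2 p)
      = (∫ p in U, l1 p) - ∫ p in U, l2 p := integral_sub hil1 hil2
  have i12 : IntegrableOn (fun p => r1 p - r2 p) U := hir1.sub hir2
  have i123 : IntegrableOn (fun p => r1 p - r2 p - r3 p) U := i12.sub hir3
  have i123P : IntegrableOn (fun p => r1 p - r2 p - r3 p + dTh P2 p) U := i123.add hiP2
  have iQ : IntegrableOn (fun p => (1/2 : ℝ) * dZ Q2 p) U := hiQ2.const_mul _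
  have hB1 : ∫ p in U, (r1 p - r2 p - r3 p + dTh P2 p + (1/2) * dZ Q2 p)
      = (∫ p in U, (r1 p - r2 p - r3 p + dTh P2 p)) + ∫ p in U, ((1/2 : ℝ) * dZ Q2 p) :=
    integral_add i123P iQ
  have hB2 : ∫ p in U, (r1 p - r2 p - r3 p + dTh P2 p)
      = (∫ p in U, (r1 p - r2 p - r3 p)) + ∫ p in U, dTh P2 p := integral_add i123 hiP2
  have hB3 : ∫ p in U, (r1 p - r2 p - r3 p)
      = (∫ p in U, (r1 p - r2 p)) - ∫ p in U, r3 p := integral_sub i12 hir3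
  have hB4 : ∫ p in U, (r1 p - r2 p)
      = (∫ p in U, r1 p) - ∫ p in U, r2 p := integral_sub hir1 hir2
  have hB5 : ∫ p in U, ((1/2 : ℝ) * dZ Q2 p)
      = (1/2 : ℝ) * ∫ p in U, dZ Q2 p := integral_const_mul _ _
  have hcongr : ∫ p in U, (l1 p - l2 p + l3 p)
      = ∫ p in U, (r1 p - r2 p - r3 p + dTh P2 p + (1/2) * dZ Q2 p) :=
    setIntegral_congr_fun hUopen.measurableSet hpoint
  show (∫ p in S.E, l1 p) - (∫ p in S.E, l2 p) + (∫ p in S.E, l3 p)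
      = (∫ p in S.E, r1 p) - (∫ p in S.E, r2 p) - (∫ p in S.E, r3 p)
  rw [red1, red2, red3, red4, red5, red6]
  linarith [hA1, hA2, hB1, hB2, hB3, hB4, hB5, hcongr, hdivP, hdivQ]
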